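/- Let n ≥ 1 and 0 ≤ a ≤ n be integers, set κ := 2n+3, and let λ be the partition (1^a, 0^{n−a}) (so λ_i = 1 for 1 ≤ i ≤ a and λ_i = 0 for a < i ≤ n). Then the following identity of formal power series in q holds: [(q^κ;q^κ)_∞^n / (q;q)_∞^n] · ∏_{i=1}^{n} θ(q^{λ_i+n−i+1}; q^κ) · ∏_{1≤i<j≤n} θ(q^{λ_i−λ_j−i+j}; q^κ) θ(q^{λ_i+λ_j+2n−i−j+2}; q^κ) = (q^{2a+1}; q^κ)_∞ (q^{2n−2a+2}; q^κ)_∞ (q^κ; q^κ)_∞ / (q;q)_∞. -/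

import Mathlib

noncomputable section

/-- The product topology on power series (coefficientwise convergence). -/
instance (R : Type*) [TopologicalSpace R] : TopologicalSpace (PowerSeries R) :=
  inferInstanceAs (TopologicalSpace ((Unit →₀ ℕ) → R))

instance (R : Type*) [TopologicalSpace R] [T2Space R] : T2Space (PowerSeries R) :=
  inferInstanceAs (T2Space ((Unit →₀ ℕ) → R))

/-- `(q^a; q^b)_∞ = ∏_{i≥0} (1 - q^{a+bi})` as a power series in `q`. -/
def qPochInf (a b : ℕ) : PowerSeries ℚ :=
  ∏' i : ℕ, (1 - (PowerSeries.X : PowerSeries ℚ) ^ (a + b * i))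

/-- The modified theta function `θ(q^e; q^κ) = (q^e; q^κ)_∞ (q^{κ−e}; q^κ)_∞`. -/
def theta (e κ : ℕ) : PowerSeries ℚ := qPochInf e κ * qPochInf (κ - e) κ

open PowerSeries Finset

lemma coeff_mul_one_sub_X_pow (P : PowerSeries ℚ) {w m : ℕ} (h : m < w) :
    PowerSeries.coeff (R := ℚ) m (P * (1 - PowerSeries.X ^ w)) = PowerSeries.coeff (R := ℚ) m P := by
  rw [mul_sub, mul_one, map_sub, PowerSeries.coeff_mul_X_pow', if_neg (by omega)]
  ring

lemma coeff_mul_congr {A A' B B' : PowerSeries ℚ} {d : ℕ}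
    (hA : ∀ m ≤ d, PowerSeries.coeff (R := ℚ) m A = PowerSeries.coeff (R := ℚ) m A')
    (hB : ∀ m ≤ d, PowerSeries.coeff (R := ℚ) m B = PowerSeries.coeff (R := ℚ) m B') :
    ∀ m ≤ d, PowerSeries.coeff (R := ℚ) m (A * B) = PowerSeries.coeff (R := ℚ) m (A' * B') := by
  intro m hm
  rw [PowerSeries.coeff_mul, PowerSeries.coeff_mul]
  refine Finset.sum_congr rfl fun p hp => ?_
  rw [Finset.HasAntidiagonal.mem_antidiagonal] at hp
  rw [hA p.1 (by omega), hB p.2 (by omega)]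

lemma coeff_prod_filter {ι : Type*} [DecidableEq ι] (F : Finset ι) (w : ι → ℕ) (d : ℕ) :
    ∀ m ≤ d, PowerSeries.coeff (R := ℚ) m (∏ i ∈ F, (1 - PowerSeries.X ^ (w i))) =
      PowerSeries.coeff (R := ℚ) m
        (∏ i ∈ F.filter (fun i => w i ≤ d), (1 - PowerSeries.X ^ (w i))) := by
  classical
  induction F using Finset.induction_on with
  | empty => simp
  | insert _ _ hx ih =>
    rename_i x F
    intro m hm
    rw [Finset.prod_insert hx, Finset.filter_insert]
    by_cases hw : w x ≤ d
    · rw [if_pos hw, Finset.prod_insert (by simp [hx])]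
      exact coeff_mul_congr (fun m hm => rfl) ih m hm
    · rw [if_neg hw, mul_comm, coeff_mul_one_sub_X_pow _ (by omega)]
      exact ih m hm

lemma hasProd_pochFamily {e b : ℕ} (he : 1 ≤ e) (hb : 1 ≤ b) :
    HasProd (fun i : ℕ => (1 : PowerSeries ℚ) - PowerSeries.X ^ (e + b * i))
      (PowerSeries.mk fun d =>
        PowerSeries.coeff (R := ℚ) d
          (∏ i ∈ Finset.range (d + 1), (1 - PowerSeries.X ^ (e + b * i)))) := by
  rw [HasProd]
  change Filter.Tendsto (fun s : Finset ℕ =>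
      ((∏ i ∈ s, ((1 : PowerSeries ℚ) - PowerSeries.X ^ (e + b * i)) : PowerSeries ℚ) :
        (Unit →₀ ℕ) → ℚ)) Filter.atTop
      (nhds (X := (Unit →₀ ℕ) → ℚ) (PowerSeries.mk fun d =>
        PowerSeries.coeff (R := ℚ) d
          (∏ i ∈ Finset.range (d + 1), (1 - PowerSeries.X ^ (e + b * i)))))
  refine (tendsto_pi_nhds (A := fun _ : Unit →₀ ℕ => ℚ)).2 ?_
  intro μ
  have hμ : μ = Finsupp.single () (μ ()) := Finsupp.unique_single μ
  rw [hμ]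
  show Filter.Tendsto
      (fun F : Finset ℕ => PowerSeries.coeff (R := ℚ) (μ ())
        (∏ i ∈ F, (1 - PowerSeries.X ^ (e + b * i)))) Filter.atTop
      (nhds (PowerSeries.coeff (R := ℚ) (μ ()) (PowerSeries.mk fun d =>
        PowerSeries.coeff (R := ℚ) d
          (∏ i ∈ Finset.range (d + 1), (1 - PowerSeries.X ^ (e + b * i))))))
  set d := μ () with hd
  rw [PowerSeries.coeff_mk]
  refine Filter.Tendsto.congr' ?_ tendsto_const_nhds
  filter_upwards [Filter.eventually_ge_atTop (Finset.range (d + 1))] with F hF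
  have h1 := coeff_prod_filter (Finset.range (d + 1)) (fun i => e + b * i) d d le_rfl
  have h2 := coeff_prod_filter F (fun i => e + b * i) d d le_rfl
  have hset : (Finset.range (d + 1)).filter (fun i => e + b * i ≤ d) =
      F.filter (fun i => e + b * i ≤ d) := by
    apply Finset.ext
    intro x
    simp only [Finset.mem_filter, Finset.mem_range]
    constructor
    · rintro ⟨hx, hw⟩
      exact ⟨hF (Finset.mem_range.2 hx), hw⟩
    · rintro ⟨hx, hw⟩
      have := Nat.le_mul_of_pos_left x (show 0 < b by omega)
      exact ⟨by omega, hw⟩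
  rw [h1, h2, hset]

lemma coeff_qPochInf {e b : ℕ} (he : 1 ≤ e) (hb : 1 ≤ b) {d m : ℕ} (hm : m ≤ d) :
    PowerSeries.coeff (R := ℚ) m (qPochInf e b) =
      PowerSeries.coeff (R := ℚ) m
        (∏ i ∈ Finset.range (d + 1), (1 - PowerSeries.X ^ (e + b * i))) := by
  rw [qPochInf, (hasProd_pochFamily he hb).tprod_eq, PowerSeries.coeff_mk]
  rw [coeff_prod_filter (Finset.range (m + 1)) (fun i => e + b * i) m m le_rfl,
    coeff_prod_filter (Finset.range (d + 1)) (fun i => e + b * i) m m le_rfl]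
  congr 1
  apply Finset.prod_congr _ (fun _ _ => rfl)
  apply Finset.ext
  intro x
  simp only [Finset.mem_filter, Finset.mem_range]
  have := Nat.le_mul_of_pos_left x (show 0 < b by omega)
  omega

lemma constantCoeff_qPochInf {e b : ℕ} (he : 1 ≤ e) (hb : 1 ≤ b) :
    PowerSeries.constantCoeff (R := ℚ) (qPochInf e b) = 1 := by
  rw [← PowerSeries.coeff_zero_eq_constantCoeff_apply,
    coeff_qPochInf he hb (le_refl 0)]
  simp [PowerSeries.coeff_zero_eq_constantCoeff_apply]
  intro h
  omega

lemma coeff_prod_congr {ι : Type*} (S : Finset ι) (P P' : ι → PowerSeries ℚ) (d : ℕ)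
    (h : ∀ r ∈ S, ∀ m ≤ d, PowerSeries.coeff (R := ℚ) m (P r) = PowerSeries.coeff (R := ℚ) m (P' r)) :
    ∀ m ≤ d, PowerSeries.coeff (R := ℚ) m (∏ r ∈ S, P r) =
      PowerSeries.coeff (R := ℚ) m (∏ r ∈ S, P' r) := by
  classical
  induction S using Finset.induction_on with
  | empty => simp
  | insert _ _ hx ih =>
    rename_i x S
    intro m hm
    rw [Finset.prod_insert hx, Finset.prod_insert hx]
    exact coeff_mul_congr (h x (Finset.mem_insert_self x S))
      (ih (fun r hr => h r (Finset.mem_insert_of_mem hr))) m hm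

lemma qPochInf_one_eq_prod {κ : ℕ} (hκ : 1 ≤ κ) :
    qPochInf 1 1 = ∏ r ∈ Finset.Icc 1 κ, qPochInf r κ := by
  apply PowerSeries.ext
  intro d
  rw [coeff_qPochInf le_rfl le_rfl (le_refl d)]
  rw [coeff_prod_congr (Finset.Icc 1 κ) _
      (fun r => ∏ i ∈ Finset.range (d + 1), (1 - PowerSeries.X ^ (r + κ * i))) d
      (fun r hr m hm =>
        coeff_qPochInf (Finset.mem_Icc.1 hr).1 hκ hm) d le_rfl]
  rw [← Finset.prod_product']
  rw [coeff_prod_filter (Finset.range (d + 1)) (fun i => 1 + 1 * i) d d le_rfl,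
    coeff_prod_filter ((Finset.Icc 1 κ) ×ˢ Finset.range (d + 1))
      (fun p => p.1 + κ * p.2) d d le_rfl]
  congr 1
  refine Finset.prod_nbij' (fun x => (x % κ + 1, x / κ))
    (fun p => p.1 + κ * p.2 - 1) ?_ ?_ ?_ ?_ ?_
  · intro x hx
    simp only [Finset.mem_filter, Finset.mem_range, Finset.mem_product,
      Finset.mem_Icc] at hx ⊢
    have h1 : x % κ < κ := Nat.mod_lt x (by omega)
    have h2 : x / κ ≤ x := Nat.div_le_self x κ
    have h3 : x % κ + κ * (x / κ) = x := Nat.mod_add_div x κ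
    omega
  · intro p hp
    simp only [Finset.mem_filter, Finset.mem_range, Finset.mem_product,
      Finset.mem_Icc] at hp ⊢
    omega
  · intro x hx
    have h3 : x % κ + κ * (x / κ) = x := Nat.mod_add_div x κ
    dsimp only
    omega
  · intro p hp
    simp only [Finset.mem_filter, Finset.mem_range, Finset.mem_product,
      Finset.mem_Icc] at hp
    have he : p.1 + κ * p.2 - 1 = (p.1 - 1) + κ * p.2 := by omega
    rw [he, Nat.add_mul_mod_self_left, Nat.add_mul_div_left _ _ (show 0 < κ by omega),
      Nat.mod_eq_of_lt (by omega), Nat.div_eq_of_lt (by omega)]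
    ext <;> simp <;> omega
  · intro x hx
    have h3 : x % κ + κ * (x / κ) = x := Nat.mod_add_div x κ
    dsimp only
    have hexp : x % κ + 1 + κ * (x / κ) = 1 + 1 * x := by omega
    rw [hexp]


lemma theta_symm {e κ : ℕ} (he : e ≤ κ) : theta (κ - e) κ = theta e κ := by
  unfold theta
  rw [Nat.sub_sub_self he, mul_comm]

def th (n t : ℕ) : PowerSeries ℚ := theta t (2 * n + 3)

def G (n b c : ℕ) : PowerSeries ℚ := th n ((b - c) + (c - b)) * th n (b + c)

def TT (n : ℕ) : PowerSeries ℚ := ∏ t ∈ Icc 1 (n + 1), th n t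

def AA (n k : ℕ) : PowerSeries ℚ := ∏ t ∈ Icc 1 k, th n t

lemma th_symm {n e : ℕ} (he : e ≤ 2 * n + 3) : th n (2 * n + 3 - e) = th n e :=
  theta_symm he

lemma constantCoeff_th {n t : ℕ} (h1 : 1 ≤ t) (h2 : t ≤ 2 * n + 2) :
    PowerSeries.constantCoeff (R := ℚ) (th n t) = 1 := by
  unfold th theta
  rw [map_mul, constantCoeff_qPochInf h1 (by omega),
    constantCoeff_qPochInf (by omega) (by omega), mul_one]

lemma th_ne_zero {n t : ℕ} (h1 : 1 ≤ t) (h2 : t ≤ 2 * n + 2) : th n t ≠ 0 := by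
  intro h
  have := constantCoeff_th (n := n) h1 h2
  rw [h, map_zero] at this
  exact absurd this (by norm_num)

lemma constantCoeff_prod {ι : Type*} (s : Finset ι) (f : ι → PowerSeries ℚ)
    (h : ∀ i ∈ s, PowerSeries.constantCoeff (R := ℚ) (f i) = 1) :
    PowerSeries.constantCoeff (R := ℚ) (∏ i ∈ s, f i) = 1 := by
  rw [map_prod]
  exact Finset.prod_eq_one h

lemma constantCoeff_TT (n : ℕ) : PowerSeries.constantCoeff (R := ℚ) (TT n) = 1 :=
  constantCoeff_prod _ _ fun t ht => by
    rw [mem_Icc] at ht; exact constantCoeff_th ht.1 (by omega)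

lemma TT_ne_zero (n : ℕ) : TT n ≠ 0 := by
  intro h
  have := constantCoeff_TT n
  rw [h, map_zero] at this
  exact absurd this (by norm_num)

lemma Gsymm (n b c : ℕ) : G n b c = G n c b := by
  unfold G
  rw [add_comm (b - c) (c - b), add_comm b c]

lemma constantCoeff_G {n b c : ℕ} (hb1 : 1 ≤ b) (hb2 : b ≤ n + 1) (hc1 : 1 ≤ c)
    (hc2 : c ≤ n + 1) (hbc : b ≠ c) : PowerSeries.constantCoeff (R := ℚ) (G n b c) = 1 := by
  unfold G
  rw [map_mul, constantCoeff_th (by omega) (by omega), constantCoeff_th (by omega) (by omega),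
    mul_one]

lemma prod_Icc_split (f : ℕ → PowerSeries ℚ) {u v w : ℕ} (h1 : u ≤ v + 1) (h2 : v ≤ w) :
    ∏ t ∈ Icc u w, f t = (∏ t ∈ Icc u v, f t) * ∏ t ∈ Icc (v + 1) w, f t := by
  rw [← Finset.prod_union (by
    rw [Finset.disjoint_left]
    intro x hx hx'
    rw [mem_Icc] at hx hx'
    omega)]
  apply Finset.prod_congr _ (fun _ _ => rfl)
  apply Finset.ext
  intro x
  simp only [mem_union, mem_Icc]
  omega

lemma sq_cancel {X Y : PowerSeries ℚ} (h : X * X = Y * Y)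
    (hX : PowerSeries.constantCoeff (R := ℚ) X = 1) (hY : PowerSeries.constantCoeff (R := ℚ) Y = 1) :
    X = Y := by
  have h2 : (X - Y) * (X + Y) = 0 := by linear_combination h
  rcases mul_eq_zero.1 h2 with h3 | h3
  · exact sub_eq_zero.1 h3
  · exfalso
    have := congrArg (PowerSeries.constantCoeff (R := ℚ)) h3
    rw [map_add, hX, hY, map_zero] at this
    norm_num at this

lemma prod_erase_split (f : ℕ → PowerSeries ℚ) {b w : ℕ} (h1 : 1 ≤ b) (h2 : b ≤ w) :
    ∏ c ∈ (Icc 1 w).erase b, f c =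
      (∏ c ∈ Icc 1 (b - 1), f c) * ∏ c ∈ Icc (b + 1) w, f c := by
  rw [show (Icc 1 w).erase b = Icc 1 (b - 1) ∪ Icc (b + 1) w by
      apply Finset.ext; intro x; simp only [mem_erase, mem_Icc, mem_union]; omega,
    Finset.prod_union (by
      rw [Finset.disjoint_left]
      intro x hx hx'
      simp only [mem_Icc] at hx hx'
      omega)]

lemma Qlem (n : ℕ) {b : ℕ} (hb1 : 1 ≤ b) (hb2 : b ≤ n + 1) :
    ∏ c ∈ Icc 1 (n + 1), th n (b + c) =
      (∏ t ∈ Icc (b + 1) (n + 1), th n t) * ∏ t ∈ Icc (n + 2 - b) (n + 1), th n t := by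
  rw [prod_Icc_split (fun c => th n (b + c)) (v := n + 1 - b) (by omega) (by omega)]
  congr 1
  · refine Finset.prod_nbij' (fun c => b + c) (fun t => t - b) ?_ ?_ ?_ ?_ ?_ <;>
      intro x hx <;> simp only [mem_Icc] at hx ⊢
    · omega
    · omega
    · omega
    · omega
  · refine Finset.prod_nbij' (fun c => 2 * n + 3 - (b + c)) (fun t => 2 * n + 3 - (b + t))
      ?_ ?_ ?_ ?_ ?_ <;> intro x hx <;> simp only [mem_Icc] at hx ⊢
    · omega
    · omega
    · omega
    · omega
    · exact (th_symm (by omega)).symm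

lemma W (n : ℕ) : ∏ b ∈ Icc 1 (n + 1), th n (b + b) = TT n := by
  unfold TT
  refine Finset.prod_nbij' (fun b => if b + b ≤ n + 1 then b + b else 2 * n + 3 - (b + b))
    (fun t => if t % 2 = 0 then t / 2 else (2 * n + 3 - t) / 2) ?_ ?_ ?_ ?_ ?_ <;>
    intro x hx <;> simp only [mem_Icc] at hx ⊢
  · split_ifs <;> omega
  · split_ifs <;> omega
  · split_ifs <;> omega
  · split_ifs <;> omega
  · split_ifs with h
    · rfl
    · exact (th_symm (by omega)).symm

lemma DdInner (n : ℕ) {b : ℕ} (hb1 : 1 ≤ b) (hb2 : b ≤ n + 1) :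
    ∏ c ∈ (Icc 1 (n + 1)).erase b, th n ((b - c) + (c - b)) =
      AA n (b - 1) * AA n (n + 1 - b) := by
  rw [prod_erase_split (fun c => th n ((b - c) + (c - b))) hb1 hb2]
  unfold AA
  congr 1
  · refine Finset.prod_nbij' (fun c => b - c) (fun t => b - t) ?_ ?_ ?_ ?_ ?_ <;>
      intro x hx <;> simp only [mem_Icc] at hx ⊢
    · omega
    · omega
    · omega
    · omega
    · exact congrArg (th n) (by omega)
  · refine Finset.prod_nbij' (fun c => c - b) (fun t => t + b) ?_ ?_ ?_ ?_ ?_ <;>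
      intro x hx <;> simp only [mem_Icc] at hx ⊢
    · omega
    · omega
    · omega
    · omega
    · exact congrArg (th n) (by omega)

lemma S1 (n : ℕ) : ∏ b ∈ Icc 1 (n + 1), ∏ t ∈ Icc 1 (b - 1), th n t =
    ∏ t ∈ Icc 1 (n + 1), th n t ^ (n + 1 - t) := by
  rw [Finset.prod_comm' (t' := Icc 1 (n + 1)) (s' := fun t => Icc (t + 1) (n + 1))
    (fun x y => by simp only [mem_Icc]; omega)]
  refine Finset.prod_congr rfl fun t ht => ?_
  rw [Finset.prod_const, Nat.card_Icc]
  congr 1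
  omega

lemma S1' (n : ℕ) : ∏ b ∈ Icc 1 (n + 1), ∏ t ∈ Icc 1 (n + 1 - b), th n t =
    ∏ t ∈ Icc 1 (n + 1), th n t ^ (n + 1 - t) := by
  rw [Finset.prod_comm' (t' := Icc 1 (n + 1)) (s' := fun t => Icc 1 (n + 1 - t))
    (fun x y => by simp only [mem_Icc]; omega)]
  refine Finset.prod_congr rfl fun t ht => ?_
  rw [Finset.prod_const, Nat.card_Icc]
  exact congrArg (th n t ^ ·) (by omega)

lemma S2 (n : ℕ) : ∏ b ∈ Icc 1 (n + 1), ∏ t ∈ Icc (b + 1) (n + 1), th n t =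
    ∏ t ∈ Icc 1 (n + 1), th n t ^ (t - 1) := by
  rw [Finset.prod_comm' (t' := Icc 1 (n + 1)) (s' := fun t => Icc 1 (t - 1))
    (fun x y => by simp only [mem_Icc]; omega)]
  refine Finset.prod_congr rfl fun t ht => ?_
  rw [Finset.prod_const, Nat.card_Icc]
  exact congrArg (th n t ^ ·) (by omega)

lemma S3 (n : ℕ) : ∏ b ∈ Icc 1 (n + 1), ∏ t ∈ Icc (n + 2 - b) (n + 1), th n t =
    ∏ t ∈ Icc 1 (n + 1), th n t ^ t := by
  rw [Finset.prod_comm' (t' := Icc 1 (n + 1)) (s' := fun t => Icc (n + 2 - t) (n + 1))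
    (fun x y => by simp only [mem_Icc]; omega)]
  refine Finset.prod_congr rfl fun t ht => ?_
  rw [Finset.prod_const, Nat.card_Icc]
  simp only [mem_Icc] at ht
  congr 1
  omega

lemma Dfull_eq (n : ℕ) :
    ∏ b ∈ Icc 1 (n + 1), ∏ c ∈ (Icc 1 (n + 1)).erase b, G n b c = TT n ^ (2 * n) := by
  apply mul_right_cancel₀ (TT_ne_zero n)
  have hsplit : ∀ b ∈ Icc 1 (n + 1), ∏ c ∈ (Icc 1 (n + 1)).erase b, G n b c =
      (AA n (b - 1) * AA n (n + 1 - b)) * ∏ c ∈ (Icc 1 (n + 1)).erase b, th n (b + c) := by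
    intro b hb
    simp only [mem_Icc] at hb
    unfold G
    rw [Finset.prod_mul_distrib, DdInner n hb.1 hb.2]
  have hQ : (∏ b ∈ Icc 1 (n + 1), ∏ c ∈ (Icc 1 (n + 1)).erase b, th n (b + c)) * TT n =
      ∏ t ∈ Icc 1 (n + 1), th n t ^ (t - 1) * th n t ^ t := by
    rw [Finset.prod_mul_distrib, ← S2 n, ← S3 n, ← W n, ← Finset.prod_mul_distrib,
      ← Finset.prod_mul_distrib]
    refine Finset.prod_congr rfl fun b hb => ?_
    rw [mul_comm (∏ c ∈ (Icc 1 (n + 1)).erase b, th n (b + c)) (th n (b + b)),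
      Finset.mul_prod_erase (Icc 1 (n + 1)) (fun c => th n (b + c)) hb]
    simp only [mem_Icc] at hb
    exact Qlem n hb.1 hb.2
  have hD : ∏ b ∈ Icc 1 (n + 1), AA n (b - 1) * AA n (n + 1 - b) =
      ∏ t ∈ Icc 1 (n + 1), th n t ^ (n + 1 - t) * th n t ^ (n + 1 - t) := by
    unfold AA
    rw [Finset.prod_mul_distrib, S1 n, S1' n, ← Finset.prod_mul_distrib]
  calc (∏ b ∈ Icc 1 (n + 1), ∏ c ∈ (Icc 1 (n + 1)).erase b, G n b c) * TT n
      = (∏ b ∈ Icc 1 (n + 1), AA n (b - 1) * AA n (n + 1 - b)) *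
        ((∏ b ∈ Icc 1 (n + 1), ∏ c ∈ (Icc 1 (n + 1)).erase b, th n (b + c)) * TT n) := by
        rw [Finset.prod_congr rfl hsplit, Finset.prod_mul_distrib]
        ring
    _ = (∏ t ∈ Icc 1 (n + 1), th n t ^ (n + 1 - t) * th n t ^ (n + 1 - t)) *
        ∏ t ∈ Icc 1 (n + 1), th n t ^ (t - 1) * th n t ^ t := by rw [hQ, hD]
    _ = ∏ t ∈ Icc 1 (n + 1), (th n t ^ (n + 1 - t) * th n t ^ (n + 1 - t)) *
          (th n t ^ (t - 1) * th n t ^ t) := by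
        rw [← Finset.prod_mul_distrib]
    _ = ∏ t ∈ Icc 1 (n + 1), th n t ^ (2 * n + 1) := by
        refine Finset.prod_congr rfl fun t ht => ?_
        simp only [mem_Icc] at ht
        rw [← pow_add, ← pow_add, ← pow_add]
        exact congrArg (th n t ^ ·) (by omega)
    _ = TT n ^ (2 * n + 1) := Finset.prod_pow _ _ _
    _ = TT n ^ (2 * n) * TT n := pow_succ _ _

lemma Gprime (n : ℕ) {m : ℕ} (hm1 : 1 ≤ m) (hm2 : m ≤ n + 1) :
    th n m * (th n (m + m) * ∏ c ∈ (Icc 1 (n + 1)).erase m, G n m c) = TT n * TT n := by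
  have h1 : ∏ c ∈ (Icc 1 (n + 1)).erase m, G n m c =
      (AA n (m - 1) * AA n (n + 1 - m)) * ∏ c ∈ (Icc 1 (n + 1)).erase m, th n (m + c) := by
    unfold G
    rw [Finset.prod_mul_distrib, DdInner n hm1 hm2]
  have h2 : th n (m + m) * ∏ c ∈ (Icc 1 (n + 1)).erase m, th n (m + c) =
      ∏ c ∈ Icc 1 (n + 1), th n (m + c) :=
    Finset.mul_prod_erase (Icc 1 (n + 1)) (fun c => th n (m + c)) (mem_Icc.2 ⟨hm1, hm2⟩)
  have h4 : th n m * AA n (m - 1) = AA n m := by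
    unfold AA
    conv_rhs => rw [prod_Icc_split (th n) (v := m - 1) (by omega) (by omega)]
    rw [show m - 1 + 1 = m by omega, Finset.Icc_self, Finset.prod_singleton, mul_comm]
  have h5 : AA n m * ∏ t ∈ Icc (m + 1) (n + 1), th n t = TT n := by
    unfold AA TT
    exact (prod_Icc_split (th n) (v := m) (by omega) (by omega)).symm
  have h6 : AA n (n + 1 - m) * ∏ t ∈ Icc (n + 2 - m) (n + 1), th n t = TT n := by
    unfold AA TT
    rw [show n + 2 - m = n + 1 - m + 1 by omega]
    exact (prod_Icc_split (th n) (v := n + 1 - m) (by omega) (by omega)).symm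
  calc th n m * (th n (m + m) * ∏ c ∈ (Icc 1 (n + 1)).erase m, G n m c)
      = (th n m * AA n (m - 1)) * AA n (n + 1 - m) *
        (th n (m + m) * ∏ c ∈ (Icc 1 (n + 1)).erase m, th n (m + c)) := by rw [h1]; ring
    _ = AA n m * AA n (n + 1 - m) *
        ((∏ t ∈ Icc (m + 1) (n + 1), th n t) * ∏ t ∈ Icc (n + 2 - m) (n + 1), th n t) := by
        rw [h4, h2, Qlem n hm1 hm2]
    _ = (AA n m * ∏ t ∈ Icc (m + 1) (n + 1), th n t) *
        (AA n (n + 1 - m) * ∏ t ∈ Icc (n + 2 - m) (n + 1), th n t) := by ring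
    _ = TT n * TT n := by rw [h5, h6]

def bt (n a i : ℕ) : ℕ := if i ≤ a then n + 2 - i else n + 1 - i

lemma RG (n a : ℕ) (hn : 1 ≤ n) (ha : a ≤ n) :
    (∏ i ∈ Icc 1 n, th n (bt n a i)) *
      ∏ i ∈ Icc 1 n, ∏ j ∈ Icc (i + 1) n,
        th n (bt n a i - bt n a j) * th n (bt n a i + bt n a j)
    = th n ((n + 1 - a) + (n + 1 - a)) * TT n ^ (n - 1) := by
  set m := n + 1 - a with hmdef
  have hm1 : 1 ≤ m := by omega
  have hm2 : m ≤ n + 1 := by omega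
  set B : Finset ℕ := (Icc 1 (n + 1)).erase m with hBdef
  set P1 : PowerSeries ℚ := ∏ i ∈ Icc 1 n, th n (bt n a i) with hP1def
  set P2 : PowerSeries ℚ := ∏ i ∈ Icc 1 n, ∏ j ∈ Icc (i + 1) n,
      th n (bt n a i - bt n a j) * th n (bt n a i + bt n a j) with hP2def
  set E : PowerSeries ℚ := ∏ c ∈ B, G n m c with hEdef
  set D : PowerSeries ℚ := ∏ b ∈ B, ∏ c ∈ B.erase b, G n b c with hDdef
  -- basic facts about bt
  have hbt1 : ∀ i, 1 ≤ i → i ≤ n → 1 ≤ bt n a i := by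
    intro i h1 h2; unfold bt; split_ifs <;> omega
  have hbt2 : ∀ i, 1 ≤ i → i ≤ n → bt n a i ≤ n + 1 := by
    intro i h1 h2; unfold bt; split_ifs <;> omega
  have hbtm : ∀ i, 1 ≤ i → i ≤ n → bt n a i ≠ m := by
    intro i h1 h2; unfold bt; split_ifs <;> omega
  have hbtmono : ∀ i j, 1 ≤ i → i < j → j ≤ n → bt n a j < bt n a i := by
    intro i j h1 h2 h3; unfold bt; split_ifs <;> omega
  have hbtinj : ∀ i j, 1 ≤ i → i ≤ n → 1 ≤ j → j ≤ n → bt n a i = bt n a j → i = j := by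
    intro i j h1 h2 h3 h4 h5
    by_contra hne
    rcases Nat.lt_or_ge i j with h | h
    · have := hbtmono i j h1 h h4
      omega
    · have := hbtmono j i h3 (by omega) h2
      omega
  have hbtmem : ∀ i ∈ Icc 1 n, bt n a i ∈ B := by
    intro i hi
    simp only [mem_Icc] at hi
    simp only [hBdef, mem_erase, mem_Icc]
    exact ⟨hbtm i hi.1 hi.2, hbt1 i hi.1 hi.2, hbt2 i hi.1 hi.2⟩
  have hinvmem : ∀ b ∈ B, (if n + 2 - a ≤ b then n + 2 - b else n + 1 - b) ∈ Icc 1 n := by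
    intro b hb
    simp only [hBdef, mem_erase, mem_Icc] at hb
    simp only [mem_Icc]
    split_ifs <;> omega
  have hleft : ∀ i ∈ Icc 1 n,
      (if n + 2 - a ≤ bt n a i then n + 2 - bt n a i else n + 1 - bt n a i) = i := by
    intro i hi
    simp only [mem_Icc] at hi
    unfold bt
    split_ifs <;> omega
  have hright : ∀ b ∈ B,
      bt n a (if n + 2 - a ≤ b then n + 2 - b else n + 1 - b) = b := by
    intro b hb
    simp only [hBdef, mem_erase, mem_Icc] at hb
    unfold bt
    split_ifs <;> omega
  -- P1 in value space
  have hP1B : P1 = ∏ b ∈ B, th n b := by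
    rw [hP1def]
    refine Finset.prod_nbij' (fun i => bt n a i)
      (fun b => if n + 2 - a ≤ b then n + 2 - b else n + 1 - b)
      hbtmem hinvmem hleft hright (fun i hi => rfl)
  -- the doubled pair product
  have hP2sq : P2 * P2 = ∏ i ∈ Icc 1 n, ∏ j ∈ (Icc 1 n).erase i, G n (bt n a i) (bt n a j) := by
    have hsplit : ∀ i ∈ Icc 1 n,
        ∏ j ∈ (Icc 1 n).erase i, G n (bt n a i) (bt n a j) =
          (∏ j ∈ Icc 1 (i - 1), G n (bt n a i) (bt n a j)) *
            ∏ j ∈ Icc (i + 1) n, G n (bt n a i) (bt n a j) := by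
      intro i hi
      simp only [mem_Icc] at hi
      exact prod_erase_split (fun j => G n (bt n a i) (bt n a j)) hi.1 hi.2
    rw [Finset.prod_congr rfl hsplit, Finset.prod_mul_distrib]
    have hcomm : ∏ i ∈ Icc 1 n, ∏ j ∈ Icc 1 (i - 1), G n (bt n a i) (bt n a j) =
        ∏ i ∈ Icc 1 n, ∏ j ∈ Icc (i + 1) n, G n (bt n a i) (bt n a j) := by
      rw [Finset.prod_comm' (t' := Icc 1 n) (s' := fun j => Icc (j + 1) n)
        (fun x y => by simp only [mem_Icc]; omega)]
      refine Finset.prod_congr rfl fun i hi => Finset.prod_congr rfl fun j hj => ?_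
      exact Gsymm n (bt n a j) (bt n a i)
    rw [hcomm]
    have hfac : ∀ i ∈ Icc 1 n, ∀ j ∈ Icc (i + 1) n,
        G n (bt n a i) (bt n a j) =
          th n (bt n a i - bt n a j) * th n (bt n a i + bt n a j) := by
      intro i hi j hj
      simp only [mem_Icc] at hi hj
      unfold G
      have : bt n a j < bt n a i := hbtmono i j hi.1 (by omega) hj.2
      rw [show bt n a i - bt n a j + (bt n a j - bt n a i) = bt n a i - bt n a j by omega]
    have : ∏ i ∈ Icc 1 n, ∏ j ∈ Icc (i + 1) n, G n (bt n a i) (bt n a j) = P2 := by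
      rw [hP2def]
      exact Finset.prod_congr rfl fun i hi => Finset.prod_congr rfl fun j hj =>
        hfac i hi j hj
    rw [this]
  -- value space for the doubled product
  have hDB : (∏ i ∈ Icc 1 n, ∏ j ∈ (Icc 1 n).erase i, G n (bt n a i) (bt n a j)) = D := by
    rw [hDdef]
    refine Finset.prod_nbij' (fun i => bt n a i)
      (fun b => if n + 2 - a ≤ b then n + 2 - b else n + 1 - b)
      hbtmem hinvmem hleft hright ?_
    intro i hi
    simp only [mem_Icc] at hi
    refine Finset.prod_nbij' (fun j => bt n a j)
      (fun c => if n + 2 - a ≤ c then n + 2 - c else n + 1 - c) ?_ ?_ ?_ ?_ (fun j hj => rfl)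
    · intro j hj
      simp only [mem_erase] at hj ⊢
      refine ⟨?_, hbtmem j hj.2⟩
      simp only [mem_Icc] at hj
      intro hc
      exact hj.1 (hbtinj j i hj.2.1 hj.2.2 hi.1 hi.2 hc)
    · intro c hc
      simp only [mem_erase] at hc ⊢
      have hcB := hinvmem c hc.2
      refine ⟨?_, hcB⟩
      intro he
      exact hc.1 (by rw [← hright c hc.2, he])
    · intro j hj
      simp only [mem_erase] at hj
      exact hleft j hj.2
    · intro c hc
      simp only [mem_erase] at hc
      exact hright c hc.2
  -- relate the full double product over Icc 1 (n+1) with D and E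
  have hfull : ∏ b ∈ Icc 1 (n + 1), ∏ c ∈ (Icc 1 (n + 1)).erase b, G n b c = E * (E * D) := by
    rw [← Finset.mul_prod_erase (Icc 1 (n + 1))
        (fun b => ∏ c ∈ (Icc 1 (n + 1)).erase b, G n b c) (mem_Icc.2 ⟨hm1, hm2⟩)]
    have hinner : ∀ b ∈ B, ∏ c ∈ (Icc 1 (n + 1)).erase b, G n b c =
        G n b m * ∏ c ∈ B.erase b, G n b c := by
      intro b hb
      simp only [hBdef, mem_erase, mem_Icc] at hb
      rw [← Finset.mul_prod_erase ((Icc 1 (n + 1)).erase b) (fun c => G n b c)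
          (by simp only [mem_erase, mem_Icc]; exact ⟨fun h => hb.1 h.symm, hm1, hm2⟩),
        Finset.erase_right_comm]
    rw [Finset.prod_congr rfl hinner, Finset.prod_mul_distrib]
    have : ∏ b ∈ B, G n b m = E := by
      rw [hEdef]
      exact Finset.prod_congr rfl fun b hb => Gsymm n b m
    rw [this, hEdef, hBdef]
  -- constant coefficients
  have hccP1 : PowerSeries.constantCoeff (R := ℚ) P1 = 1 := by
    rw [hP1B]
    refine constantCoeff_prod _ _ fun b hb => ?_
    simp only [hBdef, mem_erase, mem_Icc] at hb
    exact constantCoeff_th hb.2.1 (by omega)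
  have hccP2 : PowerSeries.constantCoeff (R := ℚ) P2 = 1 := by
    rw [hP2def]
    refine constantCoeff_prod _ _ fun i hi => ?_
    refine constantCoeff_prod _ _ fun j hj => ?_
    simp only [mem_Icc] at hi hj
    have h1 := hbt1 i hi.1 hi.2
    have h2 := hbt2 i hi.1 hi.2
    have h3 := hbt1 j (by omega) hj.2
    have h4 := hbt2 j (by omega) hj.2
    have h5 := hbtmono i j hi.1 (by omega) hj.2
    rw [map_mul, constantCoeff_th (by omega) (by omega),
      constantCoeff_th (by omega) (by omega), mul_one]
  have hccE : PowerSeries.constantCoeff (R := ℚ) E = 1 := by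
    rw [hEdef]
    refine constantCoeff_prod _ _ fun c hc => ?_
    simp only [hBdef, mem_erase, mem_Icc] at hc
    exact constantCoeff_G hm1 hm2 hc.2.1 hc.2.2 (fun h => hc.1 h.symm)
  have hccthm : PowerSeries.constantCoeff (R := ℚ) (th n m) = 1 := constantCoeff_th hm1 (by omega)
  have hccth2m : PowerSeries.constantCoeff (R := ℚ) (th n (m + m)) = 1 :=
    constantCoeff_th (by omega) (by omega)
  -- the squared identity
  have hZ : th n m * th n m * (E * E) ≠ 0 := by
    intro h
    have := congrArg (PowerSeries.constantCoeff (R := ℚ)) h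
    rw [map_mul, map_mul, map_mul, hccthm, hccE, map_zero] at this
    norm_num at this
  have hsq : (P1 * P2) * (P1 * P2) = (th n (m + m) * TT n ^ (n - 1)) *
      (th n (m + m) * TT n ^ (n - 1)) := by
    apply mul_right_cancel₀ hZ
    have e1 : (P1 * P2) * (P1 * P2) * (th n m * th n m * (E * E)) =
        (th n m * P1) * (th n m * P1) * (E * (E * (P2 * P2))) := by ring
    have hP1T : th n m * P1 = TT n := by
      rw [hP1B, hBdef]
      exact Finset.mul_prod_erase (Icc 1 (n + 1)) (th n) (mem_Icc.2 ⟨hm1, hm2⟩)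
    have hEED : E * (E * D) = TT n ^ (2 * n) := by rw [← hfull, Dfull_eq]
    have hGm : th n m * (th n (m + m) * E) = TT n * TT n := by
      rw [hEdef, hBdef]
      exact Gprime n hm1 hm2
    have hpow : TT n * TT n * TT n ^ (2 * n - 2) = TT n ^ (2 * n) := by
      rw [← pow_two, ← pow_add]
      exact congrArg (TT n ^ ·) (by omega)
    have hpow2 : TT n ^ (n - 1) * TT n ^ (n - 1) = TT n ^ (2 * n - 2) := by
      rw [← pow_add]
      exact congrArg (TT n ^ ·) (by omega)
    calc (P1 * P2) * (P1 * P2) * (th n m * th n m * (E * E))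
        = (th n m * P1) * (th n m * P1) * (E * (E * (P2 * P2))) := e1
      _ = TT n * TT n * (E * (E * D)) := by rw [hP1T, hP2sq, hDB]
      _ = TT n * TT n * TT n ^ (2 * n) := by rw [hEED]
      _ = (TT n * TT n) * (TT n * TT n) * TT n ^ (2 * n - 2) := by
          rw [← hpow]
          ring
      _ = (th n m * (th n (m + m) * E)) * (th n m * (th n (m + m) * E)) *
            TT n ^ (2 * n - 2) := by rw [hGm]
      _ = (th n (m + m) * TT n ^ (n - 1)) * (th n (m + m) * TT n ^ (n - 1)) *
            (th n m * th n m * (E * E)) := by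
          rw [← hpow2]
          ring
  exact sq_cancel hsq
    (by rw [map_mul, hccP1, hccP2, mul_one])
    (by rw [map_mul, hccth2m, map_pow, constantCoeff_TT, one_pow, mul_one])


/-- Level-rank duality at level one (equation (3.4)): for `n ≥ 1`, `0 ≤ a ≤ n`,
`κ = 2n+3` and `λ = (1^a, 0^{n−a})`,
`(q^κ;q^κ)_∞^n/(q;q)_∞^n ⬝ ∏_{i=1}^{n} θ(q^{λᵢ+n−i+1}; q^κ)
  ⬝ ∏_{1≤i<j≤n} θ(q^{λᵢ−λⱼ−i+j}; q^κ) θ(q^{λᵢ+λⱼ+2n−i−j+2}; q^κ)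
 = (q^{2a+1}; q^κ)_∞ (q^{2n−2a+2}; q^κ)_∞ (q^κ; q^κ)_∞ / (q;q)_∞`. -/
theorem level_rank_theta_product_identity (n a : ℕ) (hn : 1 ≤ n) (ha : a ≤ n) :
    (qPochInf (2 * n + 3) (2 * n + 3)) ^ n * ((qPochInf 1 1) ^ n)⁻¹ *
      (∏ i ∈ Finset.Icc 1 n,
        theta ((if i ≤ a then 1 else 0) + n - i + 1) (2 * n + 3)) *
      (∏ i ∈ Finset.Icc 1 n, ∏ j ∈ Finset.Icc (i + 1) n,
        theta ((if i ≤ a then 1 else 0) - (if j ≤ a then 1 else 0) + j - i) (2 * n + 3) *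
          theta ((if i ≤ a then 1 else 0) + (if j ≤ a then 1 else 0) + 2 * n - i - j + 2)
            (2 * n + 3)) =
    qPochInf (2 * a + 1) (2 * n + 3) * qPochInf (2 * n - 2 * a + 2) (2 * n + 3) *
      qPochInf (2 * n + 3) (2 * n + 3) * (qPochInf 1 1)⁻¹ := by
  classical
  have hU : PowerSeries.constantCoeff (R := ℚ) (qPochInf 1 1) = 1 :=
    constantCoeff_qPochInf le_rfl le_rfl
  have hUn : PowerSeries.constantCoeff (R := ℚ) (qPochInf 1 1 ^ n) ≠ 0 := by
    rw [map_pow, hU, one_pow]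
    norm_num
  have hU0 : PowerSeries.constantCoeff (R := ℚ) (qPochInf 1 1) ≠ 0 := by
    rw [hU]; norm_num
  have hUnne : (qPochInf 1 1 : PowerSeries ℚ) ^ n ≠ 0 := fun h => hUn (by rw [h, map_zero])
  have hinv : ((qPochInf 1 1) ^ n)⁻¹ * (qPochInf 1 1) ^ n = 1 :=
    PowerSeries.inv_mul_cancel _ hUn
  have hinv1 : (qPochInf 1 1)⁻¹ * qPochInf 1 1 = 1 :=
    PowerSeries.inv_mul_cancel _ hU0
  -- abbreviations
  set g : ℕ → PowerSeries ℚ := fun r => qPochInf r (2 * n + 3) with hgdef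
  -- U = TT n * g (2n+3)
  have hUTT : qPochInf 1 1 = TT n * g (2 * n + 3) := by
    rw [qPochInf_one_eq_prod (κ := 2 * n + 3) (by omega)]
    have hsucc : ∏ r ∈ Finset.Icc 1 (2 * n + 3), qPochInf r (2 * n + 3) =
        (∏ r ∈ Finset.Icc 1 (2 * n + 2), qPochInf r (2 * n + 3)) *
          qPochInf (2 * n + 3) (2 * n + 3) := by
      have h := Finset.prod_Icc_succ_top (a := 1) (b := 2 * n + 2)
        (f := fun r => qPochInf r (2 * n + 3)) (by omega)
      rw [show 2 * n + 2 + 1 = 2 * n + 3 by omega] at h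
      exact h
    rw [hsucc]
    congr 1
    rw [prod_Icc_split (fun r => qPochInf r (2 * n + 3)) (v := n + 1) (by omega) (by omega)]
    have h2 : ∏ r ∈ Finset.Icc (n + 1 + 1) (2 * n + 2), qPochInf r (2 * n + 3) =
        ∏ t ∈ Finset.Icc 1 (n + 1), qPochInf (2 * n + 3 - t) (2 * n + 3) := by
      refine Finset.prod_nbij' (fun r => 2 * n + 3 - r) (fun t => 2 * n + 3 - t)
        ?_ ?_ ?_ ?_ ?_ <;> intro x hx <;> simp only [Finset.mem_Icc] at hx ⊢
      · omega
      · omega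
      · omega
      · omega
      · exact congrArg (fun e => qPochInf e (2 * n + 3)) (by omega)
    rw [h2]
    unfold TT th theta
    rw [← Finset.prod_mul_distrib]
  -- convert statement products to bt-form
  have hP1s : (∏ i ∈ Finset.Icc 1 n,
      theta ((if i ≤ a then 1 else 0) + n - i + 1) (2 * n + 3)) =
      ∏ i ∈ Finset.Icc 1 n, th n (bt n a i) := by
    refine Finset.prod_congr rfl fun i hi => ?_
    simp only [Finset.mem_Icc] at hi
    unfold th bt
    split_ifs <;> exact congrArg (fun e => theta e (2 * n + 3)) (by omega)
  have hP2s : (∏ i ∈ Finset.Icc 1 n, ∏ j ∈ Finset.Icc (i + 1) n,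
      theta ((if i ≤ a then 1 else 0) - (if j ≤ a then 1 else 0) + j - i) (2 * n + 3) *
        theta ((if i ≤ a then 1 else 0) + (if j ≤ a then 1 else 0) + 2 * n - i - j + 2)
          (2 * n + 3)) =
      ∏ i ∈ Finset.Icc 1 n, ∏ j ∈ Finset.Icc (i + 1) n,
        th n (bt n a i - bt n a j) * th n (bt n a i + bt n a j) := by
    refine Finset.prod_congr rfl fun i hi => Finset.prod_congr rfl fun j hj => ?_
    simp only [Finset.mem_Icc] at hi hj
    unfold th bt
    split_ifs <;>
      exact congrArg₂ (· * ·) (congrArg (fun e => theta e (2 * n + 3)) (by omega))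
        (congrArg (fun e => theta e (2 * n + 3)) (by omega))
  have h2m : th n ((n + 1 - a) + (n + 1 - a)) =
      g (2 * n - 2 * a + 2) * g (2 * a + 1) := by
    unfold th theta
    rw [hgdef]
    exact congrArg₂ (· * ·) (congrArg (fun e => qPochInf e (2 * n + 3)) (by omega))
      (congrArg (fun e => qPochInf e (2 * n + 3)) (by omega))
  have hgn : g (2 * n + 3) ^ (n - 1) * g (2 * n + 3) = g (2 * n + 3) ^ n := by
    rw [← pow_succ]
    exact congrArg (g (2 * n + 3) ^ ·) (by omega)
  have hUn1 : qPochInf 1 1 ^ (n - 1) * qPochInf 1 1 = qPochInf 1 1 ^ n := by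
    rw [← pow_succ]
    exact congrArg (qPochInf 1 1 ^ ·) (by omega)
  -- the key identity without inverses
  have key : g (2 * n + 3) ^ n *
      (∏ i ∈ Finset.Icc 1 n, th n (bt n a i)) *
      (∏ i ∈ Finset.Icc 1 n, ∏ j ∈ Finset.Icc (i + 1) n,
        th n (bt n a i - bt n a j) * th n (bt n a i + bt n a j)) =
      g (2 * a + 1) * g (2 * n - 2 * a + 2) * g (2 * n + 3) *
        qPochInf 1 1 ^ (n - 1) := by
    rw [mul_assoc, RG n a hn ha, hUTT, mul_pow, h2m]
    calc g (2 * n + 3) ^ n *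
          (g (2 * n - 2 * a + 2) * g (2 * a + 1) * TT n ^ (n - 1))
        = g (2 * a + 1) * g (2 * n - 2 * a + 2) * (g (2 * n + 3) ^ (n - 1) *
            g (2 * n + 3)) * TT n ^ (n - 1) := by rw [hgn]; ring
      _ = g (2 * a + 1) * g (2 * n - 2 * a + 2) * g (2 * n + 3) *
          (TT n ^ (n - 1) * g (2 * n + 3) ^ (n - 1)) := by ring
  -- eliminate inverses
  apply mul_right_cancel₀ hUnne
  calc qPochInf (2 * n + 3) (2 * n + 3) ^ n * (qPochInf 1 1 ^ n)⁻¹ *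
        (∏ i ∈ Finset.Icc 1 n,
          theta ((if i ≤ a then 1 else 0) + n - i + 1) (2 * n + 3)) *
        (∏ i ∈ Finset.Icc 1 n, ∏ j ∈ Finset.Icc (i + 1) n,
          theta ((if i ≤ a then 1 else 0) - (if j ≤ a then 1 else 0) + j - i) (2 * n + 3) *
            theta ((if i ≤ a then 1 else 0) + (if j ≤ a then 1 else 0) + 2 * n - i - j + 2)
              (2 * n + 3)) * qPochInf 1 1 ^ n
      = qPochInf (2 * n + 3) (2 * n + 3) ^ n *
        (∏ i ∈ Finset.Icc 1 n,
          theta ((if i ≤ a then 1 else 0) + n - i + 1) (2 * n + 3)) *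
        (∏ i ∈ Finset.Icc 1 n, ∏ j ∈ Finset.Icc (i + 1) n,
          theta ((if i ≤ a then 1 else 0) - (if j ≤ a then 1 else 0) + j - i) (2 * n + 3) *
            theta ((if i ≤ a then 1 else 0) + (if j ≤ a then 1 else 0) + 2 * n - i - j + 2)
              (2 * n + 3)) * ((qPochInf 1 1 ^ n)⁻¹ * qPochInf 1 1 ^ n) := by ring
    _ = g (2 * n + 3) ^ n *
        (∏ i ∈ Finset.Icc 1 n, th n (bt n a i)) *
        (∏ i ∈ Finset.Icc 1 n, ∏ j ∈ Finset.Icc (i + 1) n,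
          th n (bt n a i - bt n a j) * th n (bt n a i + bt n a j)) := by
        rw [hinv, mul_one, hP1s, hP2s]
    _ = g (2 * a + 1) * g (2 * n - 2 * a + 2) * g (2 * n + 3) *
        qPochInf 1 1 ^ (n - 1) := key
    _ = g (2 * a + 1) * g (2 * n - 2 * a + 2) * g (2 * n + 3) *
        qPochInf 1 1 ^ (n - 1) * ((qPochInf 1 1)⁻¹ * qPochInf 1 1) := by
        rw [hinv1, mul_one]
    _ = qPochInf (2 * a + 1) (2 * n + 3) * qPochInf (2 * n - 2 * a + 2) (2 * n + 3) *
        qPochInf (2 * n + 3) (2 * n + 3) * (qPochInf 1 1)⁻¹ * qPochInf 1 1 ^ n := by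
        rw [← hUn1]
        ring
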